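/- Let Δ = (Σ_1, …, Σ_n) be a distribution of Σ. If for every pair of distinct components Σ_i, Σ_j of Δ with Σ_i ∪ Σ_j ≠ Σ and every σ' ∈ Σ − (Σ_i ∪ Σ_j) it holds that Cr_Δ(Σ_i ∪ Σ_j, σ') = [1, n] (where Cr_Δ is computed with N determined by Δ and with simple paths in the graph (Σ, D_Δ)), then Δ has no reduction. -/

import Mathlib

/-- A *distribution* of the (finite) alphabet `α`: a family of non-empty,
pairwise incomparable (under set inclusion) sub-alphabets whose union is `α`.
Its size is `comps.ncard`. -/
structure Distr (α : Type) [Fintype α] where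
  comps : Set (Set α)
  comps_nonempty : ∀ S ∈ comps, S.Nonempty
  comps_cover : ∀ a : α, ∃ S ∈ comps, a ∈ S
  comps_incomp : ∀ S ∈ comps, ∀ T ∈ comps, S ≠ T → ¬ S ⊆ T

section Defs

variable {α : Type} [Fintype α]

/-- Natural projection `P_{Σ'}`: erase from a string all symbols not in `S`. -/
noncomputable def projA (S : Set α) (s : List α) : List α :=
  s.filter fun a => @decide (a ∈ S) (Classical.propDecidable _)

/-- `L` is decomposable with respect to `Δ`:
`L = ∥_i P_{Σ_i}(L) = ⋂_i P_{Σ_i}⁻¹(P_{Σ_i}(L))`. -/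
def Decomposable (L : Set (List α)) (Δ : Distr α) : Prop :=
  L = ⋂ S ∈ Δ.comps, projA S ⁻¹' (projA S '' L)

/-- The partial order `≤_Σ` on distributions: every component of `Δ` is
contained in some component of `Δ'`. -/
def DistLE (Δ Δ' : Distr α) : Prop :=
  ∀ S ∈ Δ.comps, ∃ T ∈ Δ'.comps, S ⊆ T

/-- `P` is a *reduction* of `Δ`. -/
def IsReduction (P : Set (Distr α)) (Δ : Distr α) : Prop :=
  2 ≤ P.ncard ∧
  (∀ Δ' ∈ P, Δ'.comps.ncard < Δ.comps.ncard) ∧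
  (∀ L : Set (List α), Decomposable L Δ ↔ ∀ Δ' ∈ P, Decomposable L Δ')

/-- The maximal members (under set inclusion) of a family of sets. -/
def MaximalMem {β : Type} (F : Set (Set β)) : Set (Set β) :=
  {S | S ∈ F ∧ ∀ T ∈ F, S ⊆ T → S = T}

/-- The dependence relation `D_Δ`. -/
def DepRel (Δ : Distr α) : Set (α × α) :=
  {p | ∃ S ∈ Δ.comps, p.1 ∈ S ∧ p.2 ∈ S}

/-- The independence relation `I_Δ = Σ × Σ − D_Δ`. -/
def IndepRel (Δ : Distr α) : Set (α × α) :=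
  {p | ¬ ∃ S ∈ Δ.comps, p.1 ∈ S ∧ p.2 ∈ S}

/-- `Σ' ⊑ Δ`: `Σ'` is contained in some component of `Δ`. -/
def SqSub (S : Set α) (Δ : Distr α) : Prop :=
  ∃ T ∈ Δ.comps, S ⊆ T

/-- `Δ` is the greatest lower bound of the family `D` with respect to `≤_Σ`. -/
def IsGLBFam {l : ℕ} (D : Fin l → Distr α) (Δ : Distr α) : Prop :=
  (∀ i, DistLE Δ (D i)) ∧
  ∀ Δ''' : Distr α, (∀ i, DistLE Δ''' (D i)) → DistLE Δ''' Δ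

/-- `Δ'` is *merged* from `Δ`: `Δ' ≠ (Σ)` and `Δ'` is obtained from a
partition of the components of `Δ` having at least one block of size ≥ 2 by
taking the unions over the blocks and keeping only the maximal resulting
sub-alphabets. -/
def MergedFrom (Δ' Δ : Distr α) : Prop :=
  Δ'.comps ≠ {Set.univ} ∧
  ∃ part : Set (Set (Set α)),
    (∀ B ∈ part, B.Nonempty) ∧
    (∀ B ∈ part, B ⊆ Δ.comps) ∧
    (∀ B ∈ part, ∀ C ∈ part, B ≠ C → Disjoint B C) ∧
    (∀ S ∈ Δ.comps, ∃ B ∈ part, S ∈ B) ∧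
    (∃ B ∈ part, ∃ S ∈ B, ∃ T ∈ B, S ≠ T) ∧
    Δ'.comps = MaximalMem {U : Set α | ∃ B ∈ part, U = ⋃₀ B}

/-- Membership in the search space `S_Δ`: a set of distributions merged from
`Δ` that are pairwise `≤_Σ`-incomparable. -/
def MemS (Δ : Distr α) (P : Set (Distr α)) : Prop :=
  (∀ Δ' ∈ P, MergedFrom Δ' Δ) ∧
  ∀ Δ₁ ∈ P, ∀ Δ₂ ∈ P, Δ₁ ≠ Δ₂ → ¬ DistLE Δ₁ Δ₂

/-- The ordering `≤_Δ` on sets of distributions: every member of `Q` has a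
member of `P` below it with respect to `≤_Σ`. -/
def SetLE (P Q : Set (Distr α)) : Prop :=
  ∀ Δ' ∈ Q, ∃ Δ'' ∈ P, DistLE Δ'' Δ'

/-- `[F]`: the `≤_Σ`-minimal members of a set of distributions. -/
def MinimalD (F : Set (Distr α)) : Set (Distr α) :=
  {Δ' | Δ' ∈ F ∧ ∀ Δ'' ∈ F, DistLE Δ'' Δ' → DistLE Δ' Δ''}

/-- `Δ'` is obtained from `Δ` by merging exactly two components `S ≠ T`
(and keeping only the maximal sub-alphabets); the members of `⊥(Δ)`. -/
def MinMergedFrom (Δ' Δ : Distr α) : Prop :=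
  ∃ S ∈ Δ.comps, ∃ T ∈ Δ.comps, S ≠ T ∧
    Δ'.comps = MaximalMem ((Δ.comps \ {S, T}) ∪ {S ∪ T})

/-- The set `A(Δ)` of shared symbols of a distribution. -/
def SharedSyms (Δ : Distr α) : Set α :=
  {a | ∃ S ∈ Δ.comps, ∃ T ∈ Δ.comps, S ≠ T ∧ a ∈ S ∧ a ∈ T}

/-- The substitution of `Δ'` into the component `C` of `Δ''` yields `Δs`:
`Δs` is obtained from the components of `Δ''` other than `C` together with the
intersections `C ∩ S` for components `S` of `Δ'`, keeping only the maximal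
non-empty members. -/
def SubstResult (Δ' Δ'' : Distr α) (C : Set α) (Δs : Distr α) : Prop :=
  Δs.comps =
    MaximalMem {T : Set α |
      T.Nonempty ∧ (T ∈ Δ''.comps \ {C} ∨ ∃ S ∈ Δ'.comps, T = C ∩ S)}

/-- One swap of two adjacent symbols forming a pair in `I`. -/
def SwapStep (I : Set (α × α)) (s t : List α) : Prop :=
  ∃ (u v : List α) (a b : α),
    (a, b) ∈ I ∧ s = u ++ a :: b :: v ∧ t = u ++ b :: a :: v

/-- Trace equivalence with respect to `I`: a finite sequence of swaps of
adjacent independent symbols. -/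
def TraceEquiv (I : Set (α × α)) : List α → List α → Prop :=
  Relation.ReflTransGen (SwapStep I)

/-- `L` is trace-closed with respect to `I`. -/
def TraceClosed (I : Set (α × α)) (L : Set (List α)) : Prop :=
  L = {t | ∃ s ∈ L, TraceEquiv I s t}

/-- The map `N` determined by the enumeration `c` of the components of a
distribution: `N(a) = {i : a ∉ Σ_i}`. -/
def Nmap {n : ℕ} (c : Fin n → Set α) (a : α) : Set (Fin n) :=
  {i | a ∉ c i}

/-- A simple path from `x` to `y` in the graph `(Σ, D)`: a list of pairwise
distinct symbols, starting at `x`, ending at `y`, with consecutive symbols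
related by `D`. -/
def IsSimplePath (D : Set (α × α)) (p : List α) (x y : α) : Prop :=
  p.Nodup ∧ p.head? = some x ∧ p.getLast? = some y ∧
    p.Chain' (fun a b => (a, b) ∈ D)

/-- `Cr_D(S, y)` (with `N` given by the enumeration `c`): the set of indices
`i` such that some simple path `p` from some `x ∈ S` to `y` in `(Σ, D)`
satisfies `i ∈ ⋂_{a ∈ p.dropLast} N(a)`. -/
def CrSet {n : ℕ} (c : Fin n → Set α) (D : Set (α × α)) (S : Set α) (y : α) :
    Set (Fin n) :=
  {i | ∃ x ∈ S, ∃ p : List α,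
    IsSimplePath D p x y ∧ ∀ a ∈ p.dropLast, i ∈ Nmap c a}

/-- The smallest set of distributions containing `Q` and closed under
substitution. -/
inductive SubstClosure (Q : Set (Distr α)) : Distr α → Prop
  | base (Δ' : Distr α) (h : Δ' ∈ Q) : SubstClosure Q Δ'
  | step (Δ' Δ'' Δs : Distr α) (C : Set α)
      (h1 : SubstClosure Q Δ') (h2 : SubstClosure Q Δ'')
      (hC : C ∈ Δ''.comps) (hA : SharedSyms Δ' ⊆ C)
      (hs : SubstResult Δ' Δ'' C Δs) : SubstClosure Q Δs

end Defs

section Count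

variable {α : Type} [Fintype α] [DecidableEq α]

/-- `L(Σ_j)` (with `j` 0-indexed, so the paper's exponent `j+1` is `j+2`
here): all strings containing exactly one occurrence of each `σ_i ∈ Σ_j` and
exactly `j+2` occurrences of each `σ_i ∉ Σ_j`. -/
def Lword {m : ℕ} (σ : Fin m → α) (Sj : Set α) (j : ℕ) : Set (List α) :=
  {s | ∀ i : Fin m,
    (σ i ∈ Sj → s.count (σ i) = 1) ∧ (σ i ∉ Sj → s.count (σ i) = j + 2)}

/-- The candidate counter example `L_cand = ⋃_j L(Σ_j)`, relative to an
enumeration `c` of the components and an enumeration `σ` of the alphabet. -/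
def Lcand {n m : ℕ} (c : Fin n → Set α) (σ : Fin m → α) : Set (List α) :=
  ⋃ j : Fin n, Lword σ (c j) (j : ℕ)

end Count

set_option linter.unusedSectionVars false
section MyAux

variable {α : Type} [Fintype α]

lemma myAux_mem_projA {S : Set α} {s : List α} {a : α} (h : a ∈ projA S s) : a ∈ S := by
  have := List.of_mem_filter h
  simpa using this

lemma myAux_projA_append (S : Set α) (s t : List α) :
    projA S (s ++ t) = projA S s ++ projA S t := List.filter_append _ _

lemma myAux_projA_eq_nil (S : Set α) (s : List α) (h : ∀ a ∈ s, a ∉ S) :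
    projA S s = [] := by
  refine List.filter_eq_nil_iff.2 fun a ha => ?_
  simpa using h a ha

variable [DecidableEq α]

lemma myAux_count_projA_mem {S : Set α} {a : α} (h : a ∈ S) (s : List α) :
    (projA S s).count a = s.count a :=
  List.count_filter (by simpa using h)

lemma myAux_count_eq_of_proj_eq {S : Set α} {a : α} (h : a ∈ S) {s t : List α}
    (he : projA S s = projA S t) : s.count a = t.count a := by
  rw [← myAux_count_projA_mem h s, ← myAux_count_projA_mem h t, he]

lemma myAux_subset_interproj (L : Set (List α)) (Δ : Distr α) :
    L ⊆ ⋂ S ∈ Δ.comps, projA S ⁻¹' (projA S '' L) := fun w hw =>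
  Set.mem_iInter₂.2 fun S _ => ⟨w, hw, rfl⟩

lemma myAux_decomposable_of (L : Set (List α)) (Δ : Distr α)
    (h : (⋂ S ∈ Δ.comps, projA S ⁻¹' (projA S '' L)) ⊆ L) : Decomposable L Δ :=
  Set.Subset.antisymm (myAux_subset_interproj L Δ) h

lemma myAux_not_decomposable {L : Set (List α)} {Δ : Distr α} {w : List α}
    (hw : w ∈ ⋂ S ∈ Δ.comps, projA S ⁻¹' (projA S '' L)) (hw2 : w ∉ L) :
    ¬ Decomposable L Δ := fun hd => hw2 (hd ▸ hw)

lemma myAux_count_join_replicate (a : α) (l : List α) (k : ℕ) :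
    ((List.replicate k l).flatten).count a = k * l.count a := by
  induction k with
  | zero => simp
  | succ k ih => simp [List.replicate_succ, List.count_append, ih, Nat.succ_mul, Nat.add_comm]

/-- Step B': a distribution dominating `Δ` is above it in `≤_Σ`. -/
lemma myAux_dom_distLE (Δ Δ' : Distr α)
    (hdom : ∀ L : Set (List α), Decomposable L Δ → Decomposable L Δ') :
    DistLE Δ Δ' := by
  intro S hS
  by_contra hno
  push_neg at hno
  -- the counterexample language
  set L : Set (List α) :=
    {w | ∃ a ∈ S, w.count a = 2 ∧ ∀ b ∈ S, b ≠ a → w.count b = 1} with hL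
  have hdec : Decomposable L Δ := by
    refine myAux_decomposable_of L Δ fun w hw => ?_
    have hwS := Set.mem_iInter₂.1 hw S hS
    obtain ⟨u, huL, hproj⟩ := hwS
    obtain ⟨a, haS, hcnt2, hcnt1⟩ := huL
    exact ⟨a, haS, by rw [← myAux_count_eq_of_proj_eq haS hproj, hcnt2],
      fun b hbS hba => by rw [← myAux_count_eq_of_proj_eq hbS hproj]; exact hcnt1 b hbS hba⟩
  have hdec' := hdom L hdec
  -- counterexample word: one occurrence of each letter of S
  set w₀ : List α := (Set.toFinite S).toFinset.toList with hw₀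
  have hmemw₀ : ∀ b, b ∈ w₀ ↔ b ∈ S := by
    intro b; rw [hw₀, Finset.mem_toList, Set.Finite.mem_toFinset]
  have hcntw₀ : ∀ b ∈ S, w₀.count b = 1 := fun b hb =>
    List.count_eq_one_of_mem (Finset.nodup_toList _) ((hmemw₀ b).2 hb)
  have hw₀L : w₀ ∉ L := by
    rintro ⟨a, haS, hcnt2, -⟩
    rw [hcntw₀ a haS] at hcnt2
    omega
  have hw₀mem : w₀ ∈ ⋂ T ∈ Δ'.comps, projA T ⁻¹' (projA T '' L) := by
    refine Set.mem_iInter₂.2 fun T hT => ?_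
    obtain ⟨s, hsS, hsT⟩ := Set.not_subset.1 (hno T hT)
    refine ⟨w₀ ++ [s], ⟨s, hsS, ?_, fun b hbS hbs => ?_⟩, ?_⟩
    · rw [List.count_append, hcntw₀ s hsS]; simp
    · rw [List.count_append, hcntw₀ b hbS]
      simp [List.count_singleton, hbs, Ne.symm hbs]
    · rw [myAux_projA_append, myAux_projA_eq_nil T [s] (by simpa using hsT)]
      simp
  exact hw₀L (hdec' ▸ hw₀mem)

end MyAux


def myGood {α : Type} [Fintype α] [DecidableEq α] {n : ℕ} (c : Fin n → Set α)
    (j₀ : Fin n) (w : List α) (a : α) : Prop :=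
  (a ∈ c j₀ → w.count a = 1) ∧ (a ∉ c j₀ → w.count a = (j₀ : ℕ) + 2)

set_option linter.unusedSectionVars false

section MyAux2
variable {α : Type} [Fintype α] [DecidableEq α]

lemma myAux_pathProp {n : ℕ} (c : Fin n → Set α) (j₀ : Fin n) (w : List α)
    (D : Set (α × α))
    (step : ∀ a b, (a, b) ∈ D → w.count a = (j₀ : ℕ) + 2 → myGood c j₀ w b) :
    ∀ p : List α, ∀ x y, p.Chain' (fun a b => (a, b) ∈ D) → p.head? = some x →
      p.getLast? = some y → (∀ a ∈ p.dropLast, a ∉ c j₀) →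
      myGood c j₀ w x → myGood c j₀ w y := by
  intro p
  induction p with
  | nil => intro x y _ hx; simp at hx
  | cons hd tl ih =>
    intro x y hch hx hy hdrop hgx
    have hx' : hd = x := by simpa using hx
    subst hx'
    cases tl with
    | nil =>
      have : hd = y := by simpa using hy
      subst this; exact hgx
    | cons b rest =>
      have hmem : hd ∈ (hd :: b :: rest).dropLast := by
        rw [List.dropLast_cons₂]; exact List.mem_cons_self
      have hdnot : hd ∉ c j₀ := hdrop hd hmem
      have hcnt : w.count hd = (j₀ : ℕ) + 2 := hgx.2 hdnot
      have hch' := List.isChain_cons_cons.1 hch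
      refine ih b y hch'.2 (by simp) (by simpa using hy)
        (fun a ha => hdrop a ?_) (step hd b hch'.1 hcnt)
      rw [List.dropLast_cons₂]; exact List.mem_cons_of_mem _ ha

lemma myAux_claimC {n m : ℕ} (Δ Δ' : Distr α) (c : Fin n → Set α) (σ : Fin m → α)
    (hσ : Function.Surjective σ)
    (hc2 : Set.range c = Δ.comps)
    (h : ∀ S ∈ Δ.comps, ∀ T ∈ Δ.comps, S ≠ T → S ∪ T ≠ Set.univ →
      ∀ y : α, y ∉ S ∪ T → CrSet c (DepRel Δ) (S ∪ T) y = Set.univ)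
    (hle : DistLE Δ Δ')
    (i1 i2 : Fin n) (hne : c i1 ≠ c i2) (C : Set α) (hC : C ∈ Δ'.comps)
    (hsub : c i1 ∪ c i2 ⊆ C) :
    Decomposable (Lcand c σ) Δ' := by
  refine myAux_decomposable_of _ _ fun w hw => ?_
  have hT : ∀ T ∈ Δ'.comps, ∃ j : Fin n, ∀ a ∈ T, myGood c j w a := by
    intro T hTm
    obtain ⟨u, huL, hproj⟩ := Set.mem_iInter₂.1 hw T hTm
    obtain ⟨j, huj⟩ := Set.mem_iUnion.1 huL
    refine ⟨j, fun a haT => ?_⟩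
    obtain ⟨i, rfl⟩ := hσ a
    have hcnt : w.count (σ i) = u.count (σ i) :=
      myAux_count_eq_of_proj_eq haT hproj.symm
    exact ⟨fun hmem => by rw [hcnt]; exact (huj i).1 hmem,
           fun hmem => by rw [hcnt]; exact (huj i).2 hmem⟩
  obtain ⟨j₀, hgood⟩ := hT C hC
  have step : ∀ a b, (a, b) ∈ DepRel Δ → w.count a = (j₀ : ℕ) + 2 →
      myGood c j₀ w b := by
    intro a b hab hcnt
    obtain ⟨S0, hS0, haS0, hbS0⟩ := hab
    obtain ⟨T, hTm, hST⟩ := hle S0 hS0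
    obtain ⟨j, hj⟩ := hT T hTm
    have hja := hj a (hST haS0)
    by_cases hmem : a ∈ c j
    · have h1 := hja.1 hmem; omega
    · have h2 := hja.2 hmem
      have : j = j₀ := Fin.ext (by omega)
      subst this
      exact hj b (hST hbS0)
  have hall : ∀ y : α, myGood c j₀ w y := by
    intro y
    by_cases hy : y ∈ c i1 ∪ c i2
    · exact hgood y (hsub hy)
    · by_cases huniv : c i1 ∪ c i2 = Set.univ
      · exact absurd (by rw [huniv]; trivial) hy
      · have hCr := h (c i1) (hc2 ▸ Set.mem_range_self i1)
          (c i2) (hc2 ▸ Set.mem_range_self i2) hne huniv y hy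
        have hj₀ : j₀ ∈ CrSet c (DepRel Δ) (c i1 ∪ c i2) y := by
          rw [hCr]; trivial
        obtain ⟨x, hx, p, hp, hdrop⟩ := hj₀
        exact myAux_pathProp c j₀ w _ step p x y hp.2.2.2 hp.2.1 hp.2.2.1
          (fun a ha => hdrop a ha) (hgood x (hsub hx))
  exact Set.mem_iUnion.2 ⟨j₀, fun i => hall (σ i)⟩

lemma myAux_not_dec_Lcand {n m : ℕ} (Δ : Distr α) (c : Fin n → Set α) (σ : Fin m → α)
    (hc2 : Set.range c = Δ.comps)
    (hnu : ∀ j : Fin n, c j ≠ Set.univ) (hσ : Function.Surjective σ) :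
    ¬ Decomposable (Lcand c σ) Δ := by
  set w₀ : List α := Finset.univ.toList with hw₀
  have hcntw₀ : ∀ b : α, w₀.count b = 1 := fun b =>
    List.count_eq_one_of_mem (Finset.nodup_toList _)
      (Finset.mem_toList.2 (Finset.mem_univ b))
  have hnotin : w₀ ∉ Lcand c σ := by
    intro hmem
    obtain ⟨j, hj⟩ := Set.mem_iUnion.1 hmem
    obtain ⟨a, ha⟩ : ∃ a, a ∉ c j := by
      by_contra hcc; push_neg at hcc
      exact hnu j (Set.eq_univ_of_forall hcc)
    obtain ⟨i, rfl⟩ := hσ a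
    have h2 := (hj i).2 ha
    rw [hcntw₀] at h2
    omega
  have hin : w₀ ∈ ⋂ S ∈ Δ.comps, projA S ⁻¹' (projA S '' Lcand c σ) := by
    refine Set.mem_iInter₂.2 fun S hS => ?_
    obtain ⟨k, rfl⟩ : ∃ k, c k = S := by rw [← hc2] at hS; exact hS
    set ext : List α := projA {a | a ∉ c k} ((List.replicate ((k : ℕ) + 1) w₀).flatten)
      with hext
    have hcntext0 : ∀ b ∈ c k, ext.count b = 0 := fun b hb =>
      List.count_eq_zero.2 fun hm => (myAux_mem_projA hm) hb
    have hcntext1 : ∀ b ∉ c k, ext.count b = (k : ℕ) + 1 := by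
      intro b hb
      rw [hext, myAux_count_projA_mem (show b ∈ {a | a ∉ c k} from hb),
        myAux_count_join_replicate, hcntw₀, Nat.mul_one]
    refine ⟨w₀ ++ ext, ?_, ?_⟩
    · refine Set.mem_iUnion.2 ⟨k, fun i => ⟨fun hmem => ?_, fun hmem => ?_⟩⟩
      · rw [List.count_append, hcntw₀, hcntext0 _ hmem]
      · rw [List.count_append, hcntw₀, hcntext1 _ hmem]; omega
    · rw [myAux_projA_append, myAux_projA_eq_nil (c k) ext
        (fun a ha => myAux_mem_projA ha)]
      simp
  exact myAux_not_decomposable hin hnotin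

end MyAux2


/-- If for every pair of distinct components `S, T` of `Δ`
with `S ∪ T ≠ Σ` and every `σ' ∈ Σ − (S ∪ T)` one has
`Cr_Δ(S ∪ T, σ') = [1, n]`, then `Δ` has no reduction. -/
theorem statement_8 {α : Type} [Fintype α] (Δ : Distr α)
    (n : ℕ) (c : Fin n → Set α)
    (hc1 : Function.Injective c) (hc2 : Set.range c = Δ.comps)
    (h : ∀ S ∈ Δ.comps, ∀ T ∈ Δ.comps, S ≠ T → S ∪ T ≠ Set.univ →
      ∀ y : α, y ∉ S ∪ T → CrSet c (DepRel Δ) (S ∪ T) y = Set.univ) :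
    ¬ ∃ P : Set (Distr α), IsReduction P Δ := by
  classical
  rintro ⟨P, hcard, hlt, hiff⟩
  have hn : Δ.comps.ncard = n := by
    rw [← hc2, ← Nat.card_coe_set_eq, Nat.card_range_of_injective hc1,
      Nat.card_eq_fintype_card, Fintype.card_fin]
  have hPne : P.Nonempty := Set.nonempty_of_ncard_ne_zero (by omega)
  rcases Nat.lt_or_ge n 2 with h2 | h2
  · -- degenerate cases n = 0, 1
    obtain ⟨Δ', hΔ'⟩ := hPne
    have hl := hlt Δ' hΔ'
    rw [hn] at hl
    have hpos : 0 < n := Nat.pos_of_ne_zero (by rintro rfl; omega)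
    have hcomps : Δ'.comps = ∅ := by
      have : Δ'.comps.ncard = 0 := by omega
      exact (Set.ncard_eq_zero (Set.toFinite _)).1 this
    obtain ⟨a, _⟩ := Δ.comps_nonempty (c ⟨0, hpos⟩) (hc2 ▸ Set.mem_range_self _)
    obtain ⟨S, hS, -⟩ := Δ'.comps_cover a
    rw [hcomps] at hS
    exact hS
  · -- main case n ≥ 2
    have hnu : ∀ j : Fin n, c j ≠ Set.univ := by
      intro j hj
      have hj' : (⟨0, by omega⟩ : Fin n) ≠ ⟨1, by omega⟩ := by
        intro e; simpa using congrArg Fin.val e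
      obtain ⟨j', hjj'⟩ : ∃ j' : Fin n, j' ≠ j := by
        by_cases h0 : (⟨0, by omega⟩ : Fin n) = j
        · exact ⟨⟨1, by omega⟩, by rw [← h0]; exact Ne.symm hj'⟩
        · exact ⟨⟨0, by omega⟩, h0⟩
      refine Δ.comps_incomp (c j') (hc2 ▸ Set.mem_range_self _)
        (c j) (hc2 ▸ Set.mem_range_self _) (fun e => hjj' (hc1 e)) ?_
      rw [hj]; exact Set.subset_univ _
    set σ : Fin (Fintype.card α) → α := ⇑(Fintype.equivFin α).symm with hσdef
    have hσ : Function.Surjective σ := (Fintype.equivFin α).symm.surjective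
    have hndec : ¬ Decomposable (Lcand c σ) Δ :=
      myAux_not_dec_Lcand Δ c σ hc2 hnu hσ
    obtain ⟨Δ', hΔ'P, hnd'⟩ : ∃ Δ' ∈ P, ¬ Decomposable (Lcand c σ) Δ' := by
      by_contra hcc
      push_neg at hcc
      exact hndec ((hiff _).2 fun Δ' hΔ' => hcc Δ' hΔ')
    have hdom : ∀ L : Set (List α), Decomposable L Δ → Decomposable L Δ' :=
      fun L hL => (hiff L).1 hL Δ' hΔ'P
    have hle : DistLE Δ Δ' := myAux_dom_distLE Δ Δ' hdom
    choose T hTmem hTsub using fun i : Fin n =>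
      hle (c i) (hc2 ▸ Set.mem_range_self i)
    have hm : Δ'.comps.ncard < n := hn ▸ hlt Δ' hΔ'P
    have hTnotinj : ¬ Function.Injective T := by
      intro hinjT
      have h1 : (Set.range T).ncard = n := by
        rw [← Nat.card_coe_set_eq, Nat.card_range_of_injective hinjT,
          Nat.card_eq_fintype_card, Fintype.card_fin]
      have h2 : (Set.range T).ncard ≤ Δ'.comps.ncard :=
        Set.ncard_le_ncard (Set.range_subset_iff.2 hTmem) (Set.toFinite _)
      omega
    obtain ⟨i1, i2, heq, hne12⟩ := Function.not_injective_iff.1 hTnotinj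
    have hdec : Decomposable (Lcand c σ) Δ' :=
      myAux_claimC Δ Δ' c σ hσ hc2 h hle i1 i2 (fun e => hne12 (hc1 e))
        (T i1) (hTmem i1)
        (Set.union_subset (hTsub i1) (heq ▸ hTsub i2))
    exact hnd' hdec
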